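/- For all x > 0, K(x) := 3x·φ(x)·Φ(x) + 2φ(x)² + (x² − 1)·Φ(x)² > 0, and hence the inverse Mills ratio G(x) = φ(x)/Φ(x) is strictly convex on (0, ∞) (i.e., G''(x) = φ(x)·K(x)/Φ(x)³ > 0). -/

import Mathlib

open MeasureTheory ProbabilityTheory Real
open Set

noncomputable def stdPDF (u : ℝ) : ℝ := (Real.sqrt (2 * Real.pi))⁻¹ * Real.exp (-u ^ 2 / 2)

noncomputable def stdCDF (u : ℝ) : ℝ := ∫ t in Set.Iic u, stdPDF t

noncomputable def G (x : ℝ) : ℝ := stdPDF x / stdCDF x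

noncomputable def K (x : ℝ) : ℝ :=
  3 * x * stdPDF x * stdCDF x + 2 * (stdPDF x) ^ 2 + (x ^ 2 - 1) * (stdCDF x) ^ 2

lemma stdPDF_pos (u : ℝ) : 0 < stdPDF u := by
  unfold stdPDF
  positivity

lemma stdPDF_cont : Continuous stdPDF := by
  unfold stdPDF
  continuity

lemma stdPDF_integrable : Integrable stdPDF := by
  unfold stdPDF
  have h : Integrable (fun x : ℝ => Real.exp (-(1/2) * x ^ 2)) := integrable_exp_neg_mul_sq (by norm_num)
  have := h.const_mul (Real.sqrt (2 * Real.pi))⁻¹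
  convert this using 2 with x
  ring_nf

lemma stdPDF_total : ∫ u : ℝ, stdPDF u = 1 := by
  unfold stdPDF
  rw [MeasureTheory.integral_const_mul]
  have h : ∫ x : ℝ, Real.exp (-(1/2 : ℝ) * x ^ 2) = Real.sqrt (π / (1/2)) := integral_gaussian (1/2)
  have h2 : ∫ x : ℝ, Real.exp (-x ^ 2 / 2) = Real.sqrt (2 * π) := by
    rw [show (2 * π) = π / (1/2) by ring, ← h]
    congr 1 with x; ring_nf
  rw [h2, inv_mul_cancel₀]
  positivity

lemma stdPDF_le (u : ℝ) : stdPDF u ≤ stdPDF 0 := by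
  unfold stdPDF
  have : Real.exp (-u ^ 2 / 2) ≤ Real.exp (-(0:ℝ) ^ 2 / 2) := by
    apply Real.exp_le_exp.2; nlinarith [sq_nonneg u]
  have hc : (0:ℝ) ≤ (Real.sqrt (2 * Real.pi))⁻¹ := by positivity
  exact mul_le_mul_of_nonneg_left this hc

lemma stdCDF_pos (u : ℝ) : 0 < stdCDF u := by
  unfold stdCDF
  rw [setIntegral_pos_iff_support_of_nonneg_ae]
  · have : Function.support stdPDF = Set.univ := by
      ext x; simp [Function.mem_support, (stdPDF_pos x).ne']
    rw [this, Set.univ_inter]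
    simp [Real.volume_Iic]
  · filter_upwards with x using (stdPDF_pos x).le
  · exact stdPDF_integrable.integrableOn

lemma stdCDF_zero : stdCDF 0 = 1/2 := by
  have heven : ∀ t : ℝ, stdPDF (-t) = stdPDF t := by
    intro t; unfold stdPDF; ring_nf
  have hsym : stdCDF 0 = ∫ t in Set.Ioi (0:ℝ), stdPDF t := by
    have h1 : stdCDF 0 = ∫ t in Set.Iic (0:ℝ), stdPDF (-t) := by
      unfold stdCDF; simp_rw [heven]
    rw [h1, integral_comp_neg_Iic 0 stdPDF, neg_zero]
  have htot : stdCDF 0 + ∫ t in Set.Ioi (0:ℝ), stdPDF t = 1 := by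
    unfold stdCDF
    rw [intervalIntegral.integral_Iic_add_Ioi stdPDF_integrable.integrableOn
      stdPDF_integrable.integrableOn]
    exact stdPDF_total
  linarith [hsym ▸ htot]

lemma hasDerivAt_stdCDF (u : ℝ) : HasDerivAt stdCDF (stdPDF u) u := by
  have key : ∀ v : ℝ, stdCDF v = stdCDF 0 + ∫ t in (0:ℝ)..v, stdPDF t := by
    intro v
    have := intervalIntegral.integral_Iic_sub_Iic (μ := volume) (f := stdPDF)
      stdPDF_integrable.integrableOn stdPDF_integrable.integrableOn (a := 0) (b := v)
    unfold stdCDF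
    linarith [this]
  have hF : HasDerivAt (fun v => ∫ t in (0:ℝ)..v, stdPDF t) (stdPDF u) u := by
    apply intervalIntegral.integral_hasDerivAt_right
    · exact stdPDF_integrable.intervalIntegrable
    · exact stdPDF_cont.stronglyMeasurableAtFilter _ _
    · exact stdPDF_cont.continuousAt
  have : HasDerivAt (fun v => stdCDF 0 + ∫ t in (0:ℝ)..v, stdPDF t) (stdPDF u) u :=
    hF.const_add _
  exact this.congr_of_eventuallyEq (Filter.Eventually.of_forall fun v => key v)

lemma stdCDF_bounds {x : ℝ} (hx : 0 ≤ x) :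
    1/2 ≤ stdCDF x ∧ stdCDF x ≤ 1/2 + stdPDF 0 * x := by
  have key : stdCDF x - stdCDF 0 = ∫ t in (0:ℝ)..x, stdPDF t :=
    intervalIntegral.integral_Iic_sub_Iic stdPDF_integrable.integrableOn
      stdPDF_integrable.integrableOn
  have hii : IntervalIntegrable stdPDF volume 0 x := stdPDF_integrable.intervalIntegrable
  constructor
  · have : 0 ≤ ∫ t in (0:ℝ)..x, stdPDF t :=
      intervalIntegral.integral_nonneg hx (fun t _ => (stdPDF_pos t).le)
    rw [stdCDF_zero] at key; linarith
  · have hle : ∫ t in (0:ℝ)..x, stdPDF t ≤ ∫ t in (0:ℝ)..x, stdPDF 0 := by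
      apply intervalIntegral.integral_mono_on hx hii (intervalIntegrable_const)
      exact fun t _ => stdPDF_le t
    rw [intervalIntegral.integral_const, smul_eq_mul] at hle
    rw [stdCDF_zero] at key
    nlinarith [hle]

lemma hasDerivAt_stdPDF (u : ℝ) : HasDerivAt stdPDF (-u * stdPDF u) u := by
  have h1 : HasDerivAt (fun v : ℝ => -v ^ 2 / 2) (-u) u := by
    have := ((hasDerivAt_pow 2 u).neg.div_const 2)
    simpa using this.congr_deriv (by ring)
  have h2 := h1.exp
  have h3 := h2.const_mul (Real.sqrt (2 * Real.pi))⁻¹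
  unfold stdPDF
  exact h3.congr_deriv (by ring)

lemma deriv_G_eq : deriv G = fun v =>
    (-(v * stdPDF v * stdCDF v) - stdPDF v ^ 2) / stdCDF v ^ 2 := by
  funext v
  have h : HasDerivAt G
      ((-v * stdPDF v * stdCDF v - stdPDF v * stdPDF v) / stdCDF v ^ 2) v :=
    (hasDerivAt_stdPDF v).div (hasDerivAt_stdCDF v) (stdCDF_pos v).ne'
  rw [h.deriv]; ring

lemma deriv2_G (x : ℝ) : deriv (deriv G) x = stdPDF x * K x / stdCDF x ^ 3 := by
  rw [deriv_G_eq]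
  have hp := hasDerivAt_stdPDF x
  have hs := hasDerivAt_stdCDF x
  have hA1 : HasDerivAt (fun v => -(v * stdPDF v * stdCDF v))
      (-((1 * stdPDF x + x * (-x * stdPDF x)) * stdCDF x + x * stdPDF x * stdPDF x)) x :=
    (((hasDerivAt_id x).mul hp).mul hs).neg
  have hA2 : HasDerivAt (fun v => stdPDF v ^ 2)
      (2 * stdPDF x ^ 1 * (-x * stdPDF x)) x := hp.pow 2
  have hA := hA1.sub hA2
  have hD : HasDerivAt (fun v => stdCDF v ^ 2) (2 * stdCDF x ^ 1 * stdPDF x) x := hs.pow 2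
  have hG1 := hA.div hD (pow_ne_zero 2 (stdCDF_pos x).ne')
  erw [hG1.deriv]
  simp only [Pi.sub_apply]
  have hsne := (stdCDF_pos x).ne'
  unfold K
  field_simp
  ring

lemma stdPDF_zero_sq : stdPDF 0 ^ 2 * (2 * π) = 1 := by
  have h : Real.sqrt (2*π) ^ 2 = 2*π := Real.sq_sqrt (by positivity)
  have hne : Real.sqrt (2*π) ≠ 0 := by positivity
  unfold stdPDF
  rw [show (-(0:ℝ)^2/2) = 0 by ring, Real.exp_zero, mul_one]
  rw [← h] at *
  field_simp
  exact h.symm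

lemma stdPDF_lower (x : ℝ) : stdPDF 0 * (1 - x^2/2) ≤ stdPDF x := by
  unfold stdPDF
  have he : 1 - x^2/2 ≤ Real.exp (-x^2/2) := by
    have := Real.add_one_le_exp (-x^2/2); linarith
  rw [show (-(0:ℝ)^2/2) = 0 by ring, Real.exp_zero, mul_one]
  exact mul_le_mul_of_nonneg_left he (by positivity)

set_option maxHeartbeats 1000000 in
lemma K_pos_alg {x c p s : ℝ} (hx : 0 < x) (h1 : x < 1) (hcl : (0.3989:ℝ) ≤ c)
    (hcu : c ≤ (0.399:ℝ)) (hp : 0 < p) (hs : 0 < s)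
    (hplow : c*(1-x^2/2) ≤ p) (hsl : 1/2 ≤ s) (hsu : s ≤ 1/2 + c*x) :
    0 < 3*x*p*s + 2*p^2 + (x^2-1)*s^2 := by
  have hcpos : (0:ℝ) < c := by linarith
  have hLpos : (0:ℝ) < 1 - x^2/2 := by nlinarith
  have hLpos' : 0 < c * (1 - x^2/2) := by positivity
  have hUpos : 0 < 1/2 + c*x := by positivity
  have e1 : 3*x*(c*(1-x^2/2))*(1/2) ≤ 3*x*p*s := by
    have h := mul_le_mul_of_nonneg_left
      (mul_le_mul hplow hsl (by norm_num) hp.le) (by positivity : (0:ℝ) ≤ 3*x)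
    nlinarith [h]
  have e2 : (c*(1-x^2/2))^2 ≤ p^2 := by
    nlinarith [mul_le_mul hplow hplow hLpos'.le hp.le]
  have e3 : (x^2-1)*(1/2+c*x)^2 ≤ (x^2-1)*s^2 := by
    have hsq : s^2 ≤ (1/2+c*x)^2 := by nlinarith [mul_le_mul hsu hsu hs.le hUpos.le]
    nlinarith [mul_le_mul_of_nonpos_left hsq (by nlinarith : x^2 - 1 ≤ 0)]
  have key : 0 < 2*(c*(1-x^2/2))^2 + 3*x*(c*(1-x^2/2))*(1/2) + (x^2-1)*(1/2+c*x)^2 := by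
    nlinarith [mul_nonneg hx.le (by linarith : (0:ℝ) ≤ 1 - x),
      mul_nonneg (by linarith : (0:ℝ) ≤ c - 0.3989) hx.le,
      mul_nonneg (by nlinarith : (0:ℝ) ≤ 0.159201 - c^2) (sq_nonneg x),
      mul_nonneg (by nlinarith : (0:ℝ) ≤ c^2 - 0.159121) (sq_nonneg x),
      mul_nonneg (mul_nonneg hcpos.le (pow_nonneg hx.le 3)) (by norm_num : (0:ℝ) ≤ 1),
      mul_nonneg (mul_nonneg (mul_pos hcpos hcpos).le (pow_nonneg hx.le 4)) (by norm_num : (0:ℝ) ≤ 1),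
      sq_nonneg x, pow_nonneg hx.le 3, pow_nonneg hx.le 4]
  linarith

lemma K_pos {x : ℝ} (hx : 0 < x) : 0 < K x := by
  have hp := stdPDF_pos x
  have hs := stdCDF_pos x
  unfold K
  rcases le_or_gt 1 x with h1 | h1
  · have h3 : 0 < 3 * x * stdPDF x * stdCDF x := by positivity
    nlinarith [mul_nonneg (by nlinarith : (0:ℝ) ≤ x^2 - 1) (sq_nonneg (stdCDF x))]
  · -- 0 < x < 1
    have hcpos : 0 < stdPDF 0 := stdPDF_pos 0
    have hc2 : stdPDF 0 ^2 * (2*π) = 1 := stdPDF_zero_sq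
    have hπl : (3.141592:ℝ) < π := Real.pi_gt_d6
    have hπu : π < 3.141593 := Real.pi_lt_d6
    have hcl : (0.3989:ℝ) ≤ stdPDF 0 := by nlinarith
    have hcu : stdPDF 0 ≤ (0.399:ℝ) := by nlinarith
    obtain ⟨hsl, hsu⟩ := stdCDF_bounds hx.le
    have hplow : stdPDF 0 * (1 - x^2/2) ≤ stdPDF x := stdPDF_lower x
    have := K_pos_alg hx h1 hcl hcu hp hs hplow hsl hsu
    linarith

/-- `K(x) > 0` for `x > 0`, hence the inverse Mills ratio is strictly convex on `(0, ∞)`. -/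
theorem inverseMills_strictConvex :
    (∀ x : ℝ, 0 < x → 0 < K x) ∧
      (∀ x : ℝ, 0 < x →
        deriv (deriv G) x = stdPDF x * K x / (stdCDF x) ^ 3 ∧ 0 < deriv (deriv G) x) ∧
      StrictConvexOn ℝ (Set.Ioi 0) G := by
  refine ⟨fun x hx => K_pos hx, fun x hx => ?_, ?_⟩
  · refine ⟨deriv2_G x, ?_⟩
    rw [deriv2_G x]
    exact div_pos (mul_pos (stdPDF_pos x) (K_pos hx)) (pow_pos (stdCDF_pos x) 3)
  · apply strictConvexOn_of_deriv2_pos (convex_Ioi 0)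
    · have hdiff : Differentiable ℝ G := fun v =>
        ((hasDerivAt_stdPDF v).div (hasDerivAt_stdCDF v) (stdCDF_pos v).ne').differentiableAt
      exact hdiff.continuous.continuousOn
    · intro x hx
      rw [interior_Ioi] at hx
      have h2 : deriv^[2] G x = deriv (deriv G) x := by
        simp [Function.iterate_succ, Function.iterate_zero]
      rw [h2, deriv2_G x]
      exact div_pos (mul_pos (stdPDF_pos x) (K_pos hx)) (pow_pos (stdCDF_pos x) 3)
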